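/- If x_n ≥ 0, y_n ≥ 0 and a x_n + b y_n ≤ a, then the next iterate satisfies x_{n+1} ≥ 0 and a x_{n+1} + b y_{n+1} ≤ a, provided a ≥ d and a ≤ 4; i.e., the triangle {x ≥ 0, y ≥ 0, a x + b y ≤ a} is forward invariant under F when 0 < d ≤ a ≤ 4. -/
import Mathlib

theorem triangle_invariant (a b d x y : ℝ) (hb : 0 < b) (hd : 0 < d)
    (hda : d ≤ a) (ha4 : a ≤ 4) (hx : 0 ≤ x) (hy : 0 ≤ y) (hT : a * x + b * y ≤ a) :
    0 ≤ a * x * (1 - x) - b * x * y ∧ 0 ≤ d * x * y ∧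
    a * (a * x * (1 - x) - b * x * y) + b * (d * x * y) ≤ a := by
  have ha : 0 < a := lt_of_lt_of_le hd hda
  have hby : b * y ≤ a * (1 - x) := by nlinarith
  refine ⟨by nlinarith, by positivity, ?_⟩
  nlinarith [sq_nonneg (2 * x - 1), mul_nonneg hx hy, sq_nonneg (a * (2*x - 1)),
    mul_nonneg (mul_nonneg hb.le hx) hy, mul_le_mul_of_nonneg_right hda (mul_nonneg (mul_nonneg hb.le hx) hy)]
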